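/- arXiv:1806.01870 — 2 statements merged into one kernel-verified Lean document; each statement's English description precedes it below -/
import Mathlib

section
/- With $\phi$, $\psi$, $a$ as defined, let $\Theta=(S,U,W,\Lambda)$ have independent components with $U,W\sim U(0,1)$, $S>0$ arbitrary with a law on $(0,\infty)$, and $\Lambda = 1+B(V^{1/\rho}-1)$ for independent $B\sim\mathrm{Ber}(1-\rho)$, $V\sim U(0,1)$. Then for every $x>0$, $\phi(x,\Theta)\overset{d}{=}\psi(x,\Theta)$. -/
open MeasureTheory ProbabilityTheory Real Set

/-- The update map `φ`. -/
noncomputable def phiUpdate (α : ℝ) (x : ℝ) (θ : ℝ × ℝ × ℝ × ℝ) : ℝ :=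
  θ.2.2.2 ^ (1/α) * (θ.2.1 ^ (1/α) * x + (1 - θ.2.1) ^ (1/α) * θ.1)

/-- The threshold `a(θ) = (λ^{-1/α}-1)((1-u)/u)^{1/α} s`. -/
noncomputable def aThreshold (α : ℝ) (θ : ℝ × ℝ × ℝ × ℝ) : ℝ :=
  (θ.2.2.2 ^ (-(1/α)) - 1) * ((1 - θ.2.1) / θ.2.1) ^ (1/α) * θ.1

/-- The multigamma coupler `ψ`. -/
noncomputable def psiUpdate (α ρ : ℝ) (x : ℝ) (θ : ℝ × ℝ × ℝ × ℝ) : ℝ :=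
  if x ≤ aThreshold α θ then θ.2.2.1 ^ (1/(α*ρ)) * (1 - θ.2.1) ^ (1/α) * θ.1
  else phiUpdate α x θ

/-! ### Auxiliary definitions and lemmas -/

/-- The uniform measure on `(0,1)`. -/
noncomputable abbrev unifm : Measure ℝ := volume.restrict (Set.Ioo (0:ℝ) 1)

instance : IsProbabilityMeasure unifm := ⟨by simp⟩

lemma unifm_apply {A : Set ℝ} (hA : MeasurableSet A) : unifm A = volume (A ∩ Ioo 0 1) := by
  rw [Measure.restrict_apply hA]

lemma unifm_Iic {c : ℝ} (hc : 0 < c) (hc1 : c ≤ 1) : unifm (Iic c) = ENNReal.ofReal c := by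
  rw [unifm_apply measurableSet_Iic]
  have h1 : volume (Ioo (0:ℝ) c) = ENNReal.ofReal c := by simp
  have h2 : volume (Ioc (0:ℝ) c) = ENNReal.ofReal c := by simp
  refine le_antisymm ?_ ?_
  · rw [← h2]; exact measure_mono (fun v hv => ⟨hv.2.1, hv.1⟩)
  · rw [← h1]; exact measure_mono (fun v hv => ⟨hv.2.le, hv.1, lt_of_lt_of_le hv.2 hc1⟩)

/-- Core lemma: if `(W,V)` are iid uniform on `(0,1)` and `0 < c ≤ 1`, then
`if v ≤ c then w*c else v` is uniform on `(0,1)`. -/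
lemma core_map (c : ℝ) (hc : 0 < c) (hc1 : c ≤ 1) :
    Measure.map (fun p : ℝ × ℝ => if p.2 ≤ c then p.1 * c else p.2) (unifm.prod unifm)
      = unifm := by
  classical
  have hT : Measurable (fun p : ℝ × ℝ => if p.2 ≤ c then p.1 * c else p.2) :=
    Measurable.ite (measurableSet_le measurable_snd measurable_const)
      (measurable_fst.mul_const c) measurable_snd
  have hmapc : Measure.map (· * c) unifm = (ENNReal.ofReal c)⁻¹ • volume.restrict (Ioo 0 c) := by
    have hpre : (· * c) ⁻¹' (Ioo (0:ℝ) c) = Ioo 0 1 := by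
      ext w
      simp only [mem_preimage, mem_Ioo]
      constructor
      · rintro ⟨h1, h2⟩; constructor <;> nlinarith
      · rintro ⟨h1, h2⟩; constructor <;> nlinarith
    rw [show unifm = volume.restrict ((· * c) ⁻¹' (Ioo (0:ℝ) c)) by rw [hpre],
      ← Measure.restrict_map (measurable_mul_const c) measurableSet_Ioo,
      Real.map_volume_mul_right hc.ne']
    simp [Measure.restrict_smul, ENNReal.ofReal_inv_of_pos hc, abs_of_pos (inv_pos.mpr hc)]
  ext A hA
  rw [Measure.map_apply hT hA, Measure.prod_apply (hT hA)]
  have hsec : ∀ w : ℝ,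
      (fun v => (w, v)) ⁻¹' ((fun p : ℝ × ℝ => if p.2 ≤ c then p.1 * c else p.2) ⁻¹' A)
      = (if w * c ∈ A then Iic c else ∅) ∪ (A ∩ Ioi c) := by
    intro w
    ext v
    by_cases hv : v ≤ c
    · by_cases hw : w * c ∈ A <;> simp [hv, hw, mem_Ioi, not_lt.mpr hv]
    · by_cases hw : w * c ∈ A <;> simp [hv, hw, mem_Ioi, not_le.mp hv]
  have hval : ∀ w : ℝ,
      unifm ((fun v => (w, v)) ⁻¹' ((fun p : ℝ × ℝ => if p.2 ≤ c then p.1 * c else p.2) ⁻¹' A))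
      = ((· * c) ⁻¹' A).indicator (fun _ => ENNReal.ofReal c) w + unifm (A ∩ Ioi c) := by
    intro w
    rw [hsec w]
    by_cases hw : w * c ∈ A
    · rw [if_pos hw, measure_union (by
        refine Set.disjoint_left.mpr fun v hv hv' => ?_
        exact not_lt.mpr hv (mem_Ioi.mp hv'.2)) (hA.inter measurableSet_Ioi),
        unifm_Iic hc hc1, Set.indicator_of_mem (show w ∈ (· * c) ⁻¹' A from hw)]
    · rw [if_neg hw, Set.indicator_of_notMem (show w ∉ (· * c) ⁻¹' A from hw), empty_union,
        zero_add]
  calc ∫⁻ w, unifm ((fun v => (w, v)) ⁻¹' ((fun p : ℝ × ℝ => if p.2 ≤ c then p.1 * c else p.2) ⁻¹' A)) ∂unifm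
      = ∫⁻ w, ((· * c) ⁻¹' A).indicator (fun _ => ENNReal.ofReal c) w + unifm (A ∩ Ioi c) ∂unifm := by
        exact lintegral_congr hval
    _ = ENNReal.ofReal c * unifm ((· * c) ⁻¹' A) + unifm (A ∩ Ioi c) := by
        rw [lintegral_add_right _ measurable_const,
          lintegral_indicator ((measurable_mul_const c) hA), lintegral_const]
        simp [mul_comm]
    _ = volume (A ∩ Ioo 0 c) + volume (A ∩ Ioi c ∩ Ioo 0 1) := by
        rw [← Measure.map_apply (measurable_mul_const c) hA, hmapc,
          unifm_apply (hA.inter measurableSet_Ioi)]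
        rw [Measure.smul_apply, Measure.restrict_apply hA, smul_eq_mul, ← mul_assoc,
          ENNReal.mul_inv_cancel (by simpa using hc) ENNReal.ofReal_ne_top, one_mul]
    _ = unifm A := by
        rw [unifm_apply hA,
          ← measure_inter_add_diff (A ∩ Ioo 0 1) (measurableSet_Iic (a := c))]
        congr 1
        · refine le_antisymm ?_ ?_
          · exact measure_mono fun v hv => ⟨⟨hv.1, hv.2.1, lt_of_lt_of_le hv.2.2 hc1⟩, hv.2.2.le⟩
          · calc volume (A ∩ Ioo 0 1 ∩ Iic c)
                ≤ volume ((A ∩ Ioo 0 c) ∪ {c}) := by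
                  refine measure_mono fun v hv => ?_
                  rcases lt_or_eq_of_le (mem_Iic.mp hv.2) with h | h
                  · exact Or.inl ⟨hv.1.1, hv.1.2.1, h⟩
                  · exact Or.inr h
              _ ≤ volume (A ∩ Ioo 0 c) + volume ({c} : Set ℝ) := measure_union_le _ _
              _ = volume (A ∩ Ioo 0 c) := by simp
        · congr 1
          ext v
          simp only [mem_inter_iff, mem_diff, mem_Ioi, mem_Iic, mem_Ioo, not_le]
          tauto

/-- The conditional acceptance threshold for `V`, given `(s,u)`. -/
noncomputable def vfun (α ρ x s u : ℝ) : ℝ :=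
  (((1-u)^(1/α) * s) / (u^(1/α) * x + (1-u)^(1/α) * s)) ^ (α*ρ)

/-- The replacement map building a new uniform variable out of `(w,v)`. -/
noncomputable def gg (α ρ x s u w v : ℝ) : ℝ :=
  if v ≤ vfun α ρ x s u then w * vfun α ρ x s u else v

lemma meas_rpow_const {γ : Type*} [MeasurableSpace γ] {f : γ → ℝ} (hf : Measurable f) {q : ℝ}
    (hq : 0 ≤ q) : Measurable fun z => f z ^ q :=
  (Real.continuous_rpow_const hq).measurable.comp hf

/-- Pointwise identity: `ψ` applied to `(s,u,w,1+b(v^{1/ρ}-1))` is `φ` applied to the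
point where `v` has been replaced by `gg`. -/
lemma key_pointwise {α ρ x s u w v b : ℝ} (hα : 0 < α) (hρ : ρ ∈ Ioo (0:ℝ) 1) (hx : 0 < x)
    (hs : 0 < s) (hu : u ∈ Ioo (0:ℝ) 1) (hw : w ∈ Ioo (0:ℝ) 1) (hv : v ∈ Ioo (0:ℝ) 1)
    (hb : b = 0 ∨ b = 1) :
    psiUpdate α ρ x (s, u, w, 1 + b * (v ^ (1/ρ) - 1))
      = phiUpdate α x (s, u, w, 1 + b * ((gg α ρ x s u w v) ^ (1/ρ) - 1)) := by
  have hαρ : 0 < α * ρ := mul_pos hα hρ.1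
  rcases hb with hb | hb
  · subst hb
    norm_num [psiUpdate, aThreshold, Real.one_rpow, hx.not_ge]
  subst hb
  have hu1 : 0 < 1 - u := by linarith [hu.2]
  have hN : 0 < (1-u)^(1/α) * s := mul_pos (rpow_pos_of_pos hu1 _) hs
  have hP : 0 < u^(1/α) := rpow_pos_of_pos hu.1 _
  have hD : 0 < u^(1/α)*x + (1-u)^(1/α)*s := by positivity
  have hND0 : 0 < ((1-u)^(1/α) * s) / (u^(1/α) * x + (1-u)^(1/α) * s) := div_pos hN hD
  have hc0 : 0 < vfun α ρ x s u := rpow_pos_of_pos hND0 _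
  have he : 0 < 1/(α*ρ) := by positivity
  have hce : (vfun α ρ x s u) ^ (1/(α*ρ))
      = ((1-u)^(1/α) * s) / (u^(1/α) * x + (1-u)^(1/α) * s) := by
    rw [vfun, ← Real.rpow_mul hND0.le, mul_one_div, div_self hαρ.ne', Real.rpow_one]
  have hlam : (1:ℝ) + 1 * (v ^ (1/ρ) - 1) = v ^ (1/ρ) := by ring
  have ha : aThreshold α (s, u, w, v ^ (1/ρ))
      = ((v ^ (1/(α*ρ)))⁻¹ - 1) * ((1-u)^(1/α) * s) / u^(1/α) := by
    show ((v ^ (1/ρ)) ^ (-(1/α)) - 1) * ((1 - u) / u) ^ (1/α) * s = _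
    rw [← Real.rpow_mul hv.1.le, show (1/ρ) * (-(1/α)) = -(1/(α*ρ)) by
        rw [one_div, one_div, one_div, mul_inv]; ring,
      Real.rpow_neg hv.1.le, Real.div_rpow hu1.le hu.1.le]
    ring
  set t := v ^ (1/(α*ρ)) with hte
  have ht : 0 < t := rpow_pos_of_pos hv.1 _
  have key : x ≤ aThreshold α (s, u, w, v ^ (1/ρ)) ↔ v ≤ vfun α ρ x s u := by
    rw [ha, le_div_iff₀ hP,
      ← Real.rpow_le_rpow_iff hv.1.le hc0.le he, hce, le_div_iff₀ hD, ← hte]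
    constructor <;> intro h
    · nlinarith [mul_le_mul_of_nonneg_left h ht.le, mul_inv_cancel₀ ht.ne']
    · nlinarith [mul_le_mul_of_nonneg_left h (inv_pos.mpr ht).le, mul_inv_cancel₀ ht.ne',
        inv_mul_cancel₀ ht.ne']
  by_cases hcase : v ≤ vfun α ρ x s u
  · rw [psiUpdate, if_pos (by rw [hlam]; exact key.mpr hcase)]
    have hgg : gg α ρ x s u w v = w * vfun α ρ x s u := if_pos hcase
    rw [hgg]
    show w ^ (1/(α*ρ)) * (1 - u) ^ (1/α) * s
      = (1 + 1 * ((w * vfun α ρ x s u) ^ (1/ρ) - 1)) ^ (1/α) * (u^(1/α)*x + (1-u)^(1/α)*s)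
    rw [show (1:ℝ) + 1 * ((w * vfun α ρ x s u) ^ (1/ρ) - 1) = (w * vfun α ρ x s u) ^ (1/ρ) by ring,
      ← Real.rpow_mul (mul_nonneg hw.1.le hc0.le),
      show (1/ρ) * (1/α) = 1/(α*ρ) by rw [div_mul_div_comm, one_mul, mul_comm],
      Real.mul_rpow hw.1.le hc0.le, hce]
    field_simp
  · rw [psiUpdate, if_neg (by rw [hlam]; exact fun h => hcase (key.mp h))]
    have hgg : gg α ρ x s u w v = v := if_neg hcase
    rw [hgg]

lemma vfun_pos {α ρ x s u : ℝ} (hα : 0 < α) (hx : 0 < x) (hs : 0 < s)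
    (hu : u ∈ Ioo (0:ℝ) 1) : 0 < vfun α ρ x s u := by
  have hu1 : 0 < 1 - u := by linarith [hu.2]
  have hN : 0 < (1-u)^(1/α) * s := mul_pos (rpow_pos_of_pos hu1 _) hs
  have hP : 0 < u^(1/α) := rpow_pos_of_pos hu.1 _
  have hD : 0 < u^(1/α)*x + (1-u)^(1/α)*s := by positivity
  exact rpow_pos_of_pos (div_pos hN hD) _

lemma vfun_le_one {α ρ x s u : ℝ} (hα : 0 < α) (hρ : 0 ≤ ρ) (hx : 0 < x) (hs : 0 < s)
    (hu : u ∈ Ioo (0:ℝ) 1) : vfun α ρ x s u ≤ 1 := by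
  have hu1 : 0 < 1 - u := by linarith [hu.2]
  have hN : 0 < (1-u)^(1/α) * s := mul_pos (rpow_pos_of_pos hu1 _) hs
  have hP : 0 < u^(1/α) := rpow_pos_of_pos hu.1 _
  have hD : 0 < u^(1/α)*x + (1-u)^(1/α)*s := by positivity
  refine Real.rpow_le_one (div_nonneg hN.le hD.le) ?_ (by positivity)
  rw [div_le_one hD]
  nlinarith [mul_pos hP hx]

lemma ae_mem_Ioo_of_map_eq {Ω : Type*} [MeasureSpace Ω] {U : Ω → ℝ} (hUm : Measurable U)
    (hU : Measure.map U ℙ = volume.restrict (Set.Ioo (0:ℝ) 1)) :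
    ∀ᵐ ω ∂(ℙ : Measure Ω), U ω ∈ Ioo (0:ℝ) 1 := by
  have h0 : Measure.map U ℙ (Ioo (0:ℝ) 1)ᶜ = 0 := by
    rw [hU, Measure.restrict_apply measurableSet_Ioo.compl]
    simp
  rw [Measure.map_apply hUm measurableSet_Ioo.compl] at h0
  rw [ae_iff]
  convert h0 using 2
  rfl

/-- With `Θ = (S,U,W,Λ)` having independent components, `U,W,V` uniform on `(0,1)`,
`S > 0`, `B ∼ Ber(1-ρ)` and `Λ = 1 + B(V^{1/ρ}-1)`, for every `x > 0` the random
variables `φ(x,Θ)` and `ψ(x,Θ)` have the same distribution. -/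
theorem phi_eq_psi_in_law
    {Ω : Type*} [MeasureSpace Ω] [IsProbabilityMeasure (ℙ : Measure Ω)]
    (α ρ : ℝ) (hα : 0 < α) (hρ : ρ ∈ Set.Ioo (0:ℝ) 1)
    (S U W B V : Ω → ℝ) (hSm : Measurable S) (hUm : Measurable U) (hWm : Measurable W)
    (hBm : Measurable B) (hVm : Measurable V)
    (hindep : iIndepFun ![S, U, W, B, V] ℙ)
    (hU : Measure.map U ℙ = volume.restrict (Set.Ioo (0:ℝ) 1))
    (hW : Measure.map W ℙ = volume.restrict (Set.Ioo (0:ℝ) 1))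
    (hV : Measure.map V ℙ = volume.restrict (Set.Ioo (0:ℝ) 1))
    (hB01 : ∀ ω, B ω = 0 ∨ B ω = 1) (hB : ℙ {ω | B ω = 1} = ENNReal.ofReal (1 - ρ))
    (hSpos : ∀ᵐ ω ∂ℙ, 0 < S ω) :
    ∀ x : ℝ, 0 < x →
      Measure.map (fun ω =>
          phiUpdate α x (S ω, U ω, W ω, 1 + B ω * (V ω ^ (1/ρ) - 1))) ℙ
        = Measure.map (fun ω =>
            psiUpdate α ρ x (S ω, U ω, W ω, 1 + B ω * (V ω ^ (1/ρ) - 1))) ℙ := by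
  intro x hx
  have hmeas5 : ∀ i, Measurable (![S,U,W,B,V] i) := by
    intro i; fin_cases i <;> assumption
  haveI : IsProbabilityMeasure (Measure.map S ℙ) := Measure.isProbabilityMeasure_map hSm.aemeasurable
  haveI : IsProbabilityMeasure (Measure.map B ℙ) := Measure.isProbabilityMeasure_map hBm.aemeasurable
  -- ae membership facts
  have hUae := ae_mem_Ioo_of_map_eq hUm hU
  have hWae := ae_mem_Ioo_of_map_eq hWm hW
  have hVae := ae_mem_Ioo_of_map_eq hVm hV
  -- joint laws
  have hSU : Measure.map (fun ω => (S ω, U ω)) ℙ = (Measure.map S ℙ).prod unifm := by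
    have h := (indepFun_iff_map_prod_eq_prod_map_map hSm.aemeasurable hUm.aemeasurable).mp
      (hindep.indepFun (show (0:Fin 5) ≠ 1 by decide))
    rw [h, hU]
  have hBV : Measure.map (fun ω => (B ω, V ω)) ℙ = (Measure.map B ℙ).prod unifm := by
    have h := (indepFun_iff_map_prod_eq_prod_map_map hBm.aemeasurable hVm.aemeasurable).mp
      (hindep.indepFun (show (3:Fin 5) ≠ 4 by decide))
    rw [h, hV]
  have hWV : Measure.map (fun ω => (W ω, V ω)) ℙ = unifm.prod unifm := by
    have h := (indepFun_iff_map_prod_eq_prod_map_map hWm.aemeasurable hVm.aemeasurable).mp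
      (hindep.indepFun (show (2:Fin 5) ≠ 4 by decide))
    rw [h, hV, hW]
  have hBWV : Measure.map (fun ω => (B ω, (W ω, V ω))) ℙ
      = (Measure.map B ℙ).prod (unifm.prod unifm) := by
    have hI : IndepFun B (fun ω => (W ω, V ω)) ℙ :=
      (hindep.indepFun_prodMk hmeas5 2 4 3 (by decide) (by decide)).symm
    have h := (indepFun_iff_map_prod_eq_prod_map_map hBm.aemeasurable
      (hWm.prodMk hVm).aemeasurable).mp hI
    rw [h, hWV]
  have hLaw4 : Measure.map (fun ω => ((S ω, U ω), (B ω, V ω))) ℙ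
      = ((Measure.map S ℙ).prod unifm).prod ((Measure.map B ℙ).prod unifm) := by
    have hI : IndepFun (fun ω => (S ω, U ω)) (fun ω => (B ω, V ω)) ℙ :=
      hindep.indepFun_prodMk_prodMk hmeas5 0 1 3 4
        (by decide) (by decide) (by decide) (by decide)
    have h := (indepFun_iff_map_prod_eq_prod_map_map (hSm.prodMk hUm).aemeasurable
      (hBm.prodMk hVm).aemeasurable).mp hI
    rw [h, hSU, hBV]
  have hLaw5 : Measure.map (fun ω => ((S ω, U ω), (B ω, (W ω, V ω)))) ℙ
      = ((Measure.map S ℙ).prod unifm).prod ((Measure.map B ℙ).prod (unifm.prod unifm)) := by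
    have hI : IndepFun (fun ω => (S ω, U ω)) (fun ω => (B ω, (W ω, V ω))) ℙ := by
      have h := hindep.indepFun_finset {0,1} {2,3,4} (by decide) hmeas5
      have hL : Measurable (fun p : (({0,1} : Finset (Fin 5)) → ℝ) =>
          (p ⟨0, by decide⟩, p ⟨1, by decide⟩)) :=
        (measurable_pi_apply _).prodMk (measurable_pi_apply _)
      have hR : Measurable (fun p : (({2,3,4} : Finset (Fin 5)) → ℝ) =>
          (p ⟨3, by decide⟩, (p ⟨2, by decide⟩, p ⟨4, by decide⟩))) :=
        (measurable_pi_apply _).prodMk ((measurable_pi_apply _).prodMk (measurable_pi_apply _))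
      exact h.comp hL hR
    have h := (indepFun_iff_map_prod_eq_prod_map_map (hSm.prodMk hUm).aemeasurable
      (hBm.prodMk (hWm.prodMk hVm)).aemeasurable).mp hI
    rw [h, hSU, hBWV]
  -- the function F and the skew-product transform
  set F : (ℝ×ℝ)×(ℝ×ℝ) → ℝ := fun p =>
    phiUpdate α x (p.1.1, p.1.2, 0, 1 + p.2.1 * (p.2.2 ^ (1/ρ) - 1)) with hFdef
  have h1α : (0:ℝ) ≤ 1/α := le_of_lt (one_div_pos.mpr hα)
  have h1ρ : (0:ℝ) ≤ 1/ρ := le_of_lt (one_div_pos.mpr hρ.1)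
  have hαρnn : (0:ℝ) ≤ α*ρ := (mul_pos hα hρ.1).le
  have hFm : Measurable F := by
    have h1 : Measurable fun p : (ℝ×ℝ)×(ℝ×ℝ) => 1 + p.2.1 * (p.2.2 ^ (1/ρ) - 1) :=
      measurable_const.add (measurable_snd.fst.mul
        ((meas_rpow_const measurable_snd.snd h1ρ).sub measurable_const))
    exact (meas_rpow_const h1 h1α).mul
      (((meas_rpow_const measurable_fst.snd h1α).mul_const x).add
        ((meas_rpow_const (measurable_const.sub measurable_fst.snd) h1α).mul
          measurable_fst.fst))
  have hvfm : Measurable fun p : ℝ×ℝ => vfun α ρ x p.1 p.2 := by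
    unfold vfun
    exact meas_rpow_const
      (((meas_rpow_const (measurable_const.sub measurable_snd) h1α).mul
        measurable_fst).div
        (((meas_rpow_const measurable_snd h1α).mul_const x).add
          ((meas_rpow_const (measurable_const.sub measurable_snd) h1α).mul
            measurable_fst))) hαρnn
  have hggm : Measurable fun q : (ℝ×ℝ)×(ℝ×(ℝ×ℝ)) => gg α ρ x q.1.1 q.1.2 q.2.2.1 q.2.2.2 := by
    unfold gg
    exact Measurable.ite
      (measurableSet_le measurable_snd.snd.snd (hvfm.comp measurable_fst))
      (measurable_snd.snd.fst.mul (hvfm.comp measurable_fst))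
      measurable_snd.snd.snd
  set skewF : (ℝ×ℝ)×(ℝ×(ℝ×ℝ)) → (ℝ×ℝ)×(ℝ×ℝ) := fun q =>
    (q.1, (q.2.1, gg α ρ x q.1.1 q.1.2 q.2.2.1 q.2.2.2)) with hskewdef
  have hskewm : Measurable skewF := measurable_fst.prodMk (measurable_snd.fst.prodMk hggm)
  -- the skew product preserves the product measure
  have hae_su : ∀ᵐ su ∂((Measure.map S ℙ).prod unifm), 0 < su.1 ∧ su.2 ∈ Ioo (0:ℝ) 1 := by
    have h1 : ∀ᵐ su ∂((Measure.map S ℙ).prod unifm), 0 < su.1 := by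
      rw [ae_iff]
      have hset : {su : ℝ×ℝ | ¬ 0 < su.1} = {s : ℝ | ¬ 0 < s} ×ˢ (univ : Set ℝ) := by
        ext p; simp [Set.mem_prod]
      have hnull : Measure.map S ℙ {s : ℝ | ¬ 0 < s} = 0 := by
        have hms : MeasurableSet {s : ℝ | ¬ 0 < s} := by
          rw [show {s : ℝ | ¬ 0 < s} = {s : ℝ | 0 < s}ᶜ from rfl]
          exact (measurableSet_lt measurable_const measurable_id).compl
        rw [Measure.map_apply hSm hms]
        exact ae_iff.mp hSpos
      rw [hset, Measure.prod_prod, hnull, zero_mul]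
    have h2 : ∀ᵐ su ∂((Measure.map S ℙ).prod unifm), su.2 ∈ Ioo (0:ℝ) 1 := by
      rw [ae_iff]
      have hset : {su : ℝ×ℝ | ¬ su.2 ∈ Ioo (0:ℝ) 1}
          = (univ : Set ℝ) ×ˢ {u : ℝ | ¬ u ∈ Ioo (0:ℝ) 1} := by
        ext p; simp [Set.mem_prod]
      have hnull : unifm {u : ℝ | ¬ u ∈ Ioo (0:ℝ) 1} = 0 := by
        rw [show {u : ℝ | ¬ u ∈ Ioo (0:ℝ) 1} = (Ioo (0:ℝ) 1)ᶜ from rfl,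
          Measure.restrict_apply measurableSet_Ioo.compl]
        simp
      rw [hset, Measure.prod_prod, hnull, mul_zero]
    exact h1.and h2
  have hskew_mp : Measure.map skewF
      (((Measure.map S ℙ).prod unifm).prod ((Measure.map B ℙ).prod (unifm.prod unifm)))
      = ((Measure.map S ℙ).prod unifm).prod ((Measure.map B ℙ).prod unifm) := by
    have hg : ∀ᵐ su ∂((Measure.map S ℙ).prod unifm),
        Measure.map (fun p : ℝ×(ℝ×ℝ) => (p.1, gg α ρ x su.1 su.2 p.2.1 p.2.2))
          ((Measure.map B ℙ).prod (unifm.prod unifm)) = (Measure.map B ℙ).prod unifm := by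
      filter_upwards [hae_su] with su hsu
      have hc0 : 0 < vfun α ρ x su.1 su.2 := vfun_pos hα hx hsu.1 hsu.2
      have hc1 : vfun α ρ x su.1 su.2 ≤ 1 := vfun_le_one hα hρ.1.le hx hsu.1 hsu.2
      have hcore : MeasurePreserving
          (fun p : ℝ×ℝ => if p.2 ≤ vfun α ρ x su.1 su.2 then p.1 * vfun α ρ x su.1 su.2 else p.2)
          (unifm.prod unifm) unifm :=
        ⟨Measurable.ite (measurableSet_le measurable_snd measurable_const)
          (measurable_fst.mul_const _) measurable_snd, core_map _ hc0 hc1⟩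
      exact ((MeasurePreserving.id (Measure.map B ℙ)).prod hcore).map_eq
    have h := (MeasurePreserving.id ((Measure.map S ℙ).prod unifm)).skew_product
      (g := fun su (p : ℝ×(ℝ×ℝ)) => (p.1, gg α ρ x su.1 su.2 p.2.1 p.2.2))
      (measurable_snd.fst.prodMk hggm) hg
    exact h.map_eq
  -- LHS
  have hLHS : Measure.map (fun ω =>
      phiUpdate α x (S ω, U ω, W ω, 1 + B ω * (V ω ^ (1/ρ) - 1))) ℙ
      = Measure.map F (((Measure.map S ℙ).prod unifm).prod ((Measure.map B ℙ).prod unifm)) := by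
    rw [← hLaw4, Measure.map_map hFm
      ((hSm.prodMk hUm).prodMk (hBm.prodMk hVm))]
    rfl
  -- RHS
  have hRHS : Measure.map (fun ω =>
      psiUpdate α ρ x (S ω, U ω, W ω, 1 + B ω * (V ω ^ (1/ρ) - 1))) ℙ
      = Measure.map F (((Measure.map S ℙ).prod unifm).prod ((Measure.map B ℙ).prod unifm)) := by
    have hae : (fun ω => psiUpdate α ρ x (S ω, U ω, W ω, 1 + B ω * (V ω ^ (1/ρ) - 1)))
        =ᵐ[ℙ] (F ∘ skewF) ∘ (fun ω => ((S ω, U ω), (B ω, (W ω, V ω)))) := by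
      filter_upwards [hSpos, hUae, hWae, hVae] with ω h1 h2 h3 h4
      exact key_pointwise hα hρ hx h1 h2 h3 h4 (hB01 ω)
    rw [Measure.map_congr hae,
      ← Measure.map_map (hFm.comp hskewm)
        ((hSm.prodMk hUm).prodMk (hBm.prodMk (hWm.prodMk hVm))),
      hLaw5, ← Measure.map_map hFm hskewm, hskew_mp]
  rw [hLHS, hRHS]
end

section
/- Let $\{J_n\}_{n\geq 1}$ be independent Bernoulli random variables with $p_n = \mathbb{P}(J_n = 0)$ satisfying $\sum_{n\geq 1}(1-p_n)<\infty$, and suppose $q_n\in(0,1]$ satisfy $q_n \leq \prod_{k=n}^{\infty} p_k$ for all $n\geq n^*$. Let $\{U^{(n)}\}_{n\geq n^*}$ be constructed by the recursion $(J_n, U^{(n+1)}) = F(U^{(n)}, p_n)$ from $U^{(n^*)}\sim U(0,1)$ (where $F$ is the uniform splitting map), and define $\varsigma = \inf\{n\geq n^*: U^{(n)}\leq q_n\}$ and $\tau=\sup\{n\geq 0: J_n = 1\}^+$. Then: (a) if $\lim_{n\to\infty}q_n = 1$ then $\varsigma<\infty$ a.s.; (b) if $\sum_{n\geq n^*}(1-q_n)<\infty$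 then $\mathbb{E}\varsigma<\infty$; (c) if $\sum_{n\geq n^*}(1-q_n)e^{tn}<\infty$ for some $t>0$ then $\mathbb{E} e^{t\varsigma}<\infty$. -/
open MeasureTheory ProbabilityTheory Real Set Filter
open scoped ENNReal

private lemma splitting_measurable (c : ℝ) :
    Measurable (fun x : ℝ => if x ≤ c then x / c else (x - c) / (1 - c)) :=
  Measurable.ite (measurableSet_le measurable_id measurable_const)
    (measurable_id.div_const c) ((measurable_id.sub_const c).div_const (1 - c))

private lemma splitting_uniform {c : ℝ} (hc : c ∈ Set.Ioo (0:ℝ) 1) :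
    Measure.map (fun x : ℝ => if x ≤ c then x / c else (x - c) / (1 - c))
      (volume.restrict (Set.Ioo (0:ℝ) 1)) = volume.restrict (Set.Ioo (0:ℝ) 1) := by
  obtain ⟨hc0, hc1⟩ := hc
  have h1c : (0:ℝ) < 1 - c := by linarith
  set g : ℝ → ℝ := fun x => if x ≤ c then x / c else (x - c) / (1 - c) with hgdef
  have hgm : Measurable g := splitting_measurable c
  refine Measure.ext_of_Iic _ _ (fun x => ?_)
  rw [Measure.map_apply hgm measurableSet_Iic,
    Measure.restrict_apply (hgm measurableSet_Iic),
    Measure.restrict_apply measurableSet_Iic]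
  rcases le_or_gt x 0 with hx | hx
  · have h1 : g ⁻¹' Set.Iic x ∩ Set.Ioo 0 1 = ∅ := by
      ext y
      simp only [Set.mem_inter_iff, Set.mem_preimage, Set.mem_Iic, Set.mem_Ioo,
        Set.mem_empty_iff_false, iff_false, not_and]
      intro hgy hy0 hy1
      have hpos : 0 < g y := by
        by_cases h : y ≤ c
        · simp only [g, if_pos h]; exact div_pos hy0 hc0
        · simp only [g, if_neg h]; push_neg at h; exact div_pos (by linarith) h1c
      linarith
    have h2 : Set.Iic x ∩ Set.Ioo 0 1 = ∅ := by
      ext y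
      simp only [Set.mem_inter_iff, Set.mem_Iic, Set.mem_Ioo, Set.mem_empty_iff_false,
        iff_false, not_and]
      intro h1 h2 _; linarith
    rw [h1, h2]
  rcases lt_or_ge x 1 with hx1 | hx1
  · have hset : g ⁻¹' Set.Iic x ∩ Set.Ioo 0 1
        = Set.Ioc 0 (c * x) ∪ Set.Ioc c (c + (1 - c) * x) := by
      ext y
      simp only [Set.mem_inter_iff, Set.mem_preimage, Set.mem_Iic, Set.mem_Ioo,
        Set.mem_union, Set.mem_Ioc]
      constructor
      · rintro ⟨hgy, hy0, hy1⟩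
        by_cases h : y ≤ c
        · left
          refine ⟨hy0, ?_⟩
          have h' : y / c ≤ x := by simpa only [g, if_pos h] using hgy
          have := (div_le_iff₀ hc0).mp h'
          linarith
        · right
          push_neg at h
          refine ⟨h, ?_⟩
          have h' : (y - c) / (1 - c) ≤ x := by simpa only [g, if_neg (not_le.mpr h)] using hgy
          have := (div_le_iff₀ h1c).mp h'
          linarith
      · rintro (⟨hy0, hyx⟩ | ⟨hyc, hyx⟩)
        · have hyc : y ≤ c := le_trans hyx (by nlinarith)
          refine ⟨?_, hy0, by nlinarith⟩
          simp only [g, if_pos hyc]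
          rw [div_le_iff₀ hc0]; linarith
        · refine ⟨?_, by linarith, by nlinarith⟩
          simp only [g, if_neg (not_le.mpr hyc)]
          rw [div_le_iff₀ h1c]; linarith
    have hset2 : Set.Iic x ∩ Set.Ioo 0 1 = Set.Ioc 0 x := by
      ext y
      simp only [Set.mem_inter_iff, Set.mem_Iic, Set.mem_Ioo, Set.mem_Ioc]
      constructor
      · rintro ⟨h1, h2, _⟩; exact ⟨h2, h1⟩
      · rintro ⟨h1, h2⟩; exact ⟨h2, h1, by linarith⟩
    rw [hset, hset2, measure_union ?_ measurableSet_Ioc]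
    · rw [Real.volume_Ioc, Real.volume_Ioc, Real.volume_Ioc,
        ← ENNReal.ofReal_add (by nlinarith) (by nlinarith)]
      congr 1; ring
    · rw [Set.Ioc_disjoint_Ioc]
      refine le_trans (min_le_left _ _) (le_trans ?_ (le_max_right _ _))
      nlinarith
  · have hset : g ⁻¹' Set.Iic x ∩ Set.Ioo 0 1 = Set.Ioo 0 1 := by
      rw [Set.inter_eq_right]
      rintro y ⟨hy0, hy1⟩
      simp only [Set.mem_preimage, Set.mem_Iic]
      by_cases h : y ≤ c
      · simp only [g, if_pos h]
        refine le_trans ?_ hx1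
        rw [div_le_one hc0]; exact h
      · simp only [g, if_neg h]
        refine le_trans ?_ hx1
        rw [div_le_one h1c]; linarith
    have hset2 : Set.Iic x ∩ Set.Ioo 0 1 = Set.Ioo 0 1 := by
      rw [Set.inter_eq_right]
      rintro y ⟨hy0, hy1⟩
      exact le_trans hy1.le hx1
    rw [hset, hset2]

/-- Running time of the backward-detection algorithm. With `U^{(n*)}` uniform on `(0,1)`
and the recursion `U^{(n+1)} = F(U^{(n)}, p_n)` (uniform splitting), probabilities
`p_n ∈ (0,1)` with `∑ (1-p_n) < ∞`, and computable bounds `q_n ≤ ∏_{k≥n} p_k`, the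
running time `ς = inf{n ≥ n* : U^{(n)} ≤ q_n}` satisfies:
(a) if `q_n → 1` then `ς < ∞` a.s.;
(b) if `∑_{n≥n*}(1-q_n) < ∞` then `𝔼 ς < ∞`;
(c) if `∑_{n≥n*}(1-q_n)e^{tn} < ∞` for some `t > 0` then `𝔼 e^{tς} < ∞`. -/
theorem running_time_finiteness
    {Ω : Type*} [MeasureSpace Ω] [IsProbabilityMeasure (ℙ : Measure Ω)]
    (p q : ℕ → ℝ) (nstar : ℕ)
    (hp : ∀ n, p n ∈ Set.Ioo (0:ℝ) 1) (hpsum : Summable (fun n => 1 - p n))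
    (hq : ∀ n, nstar ≤ n → q n ∈ Set.Ioc (0:ℝ) 1)
    (hqle : ∀ n, nstar ≤ n → q n ≤ ∏' k : ℕ, p (n + k))
    (U : ℕ → Ω → ℝ) (hUm : ∀ n, Measurable (U n))
    (hUstar : Measure.map (U nstar) ℙ = volume.restrict (Set.Ioo (0:ℝ) 1))
    (hrec : ∀ n, nstar ≤ n → ∀ ω,
      U (n + 1) ω = if U n ω ≤ p n then U n ω / p n else (U n ω - p n) / (1 - p n))
    (ς : Ω → ℕ) (hς : ∀ ω, ς ω = sInf {n : ℕ | nstar ≤ n ∧ U n ω ≤ q n}) :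
    (Tendsto q atTop (nhds 1) →
      ∀ᵐ ω ∂ℙ, {n : ℕ | nstar ≤ n ∧ U n ω ≤ q n}.Nonempty) ∧
    ((Summable fun n : ℕ => 1 - q (nstar + n)) →
      ∫⁻ ω, (ς ω : ℝ≥0∞) ∂ℙ < ⊤) ∧
    (∀ t : ℝ, 0 < t → (Summable fun n : ℕ => (1 - q (nstar + n)) * Real.exp (t * (nstar + n))) →
      ∫⁻ ω, ENNReal.ofReal (Real.exp (t * ς ω)) ∂ℙ < ⊤) := by
  -- marginal of U n is uniform on (0,1) for every n ≥ nstar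
  have hmap : ∀ n, nstar ≤ n → Measure.map (U n) ℙ = volume.restrict (Set.Ioo (0:ℝ) 1) := by
    intro n hn
    induction n, hn using Nat.le_induction with
    | base => exact hUstar
    | succ n hn ih =>
      have hcomp : U (n+1) =
          (fun x => if x ≤ p n then x / p n else (x - p n) / (1 - p n)) ∘ U n :=
        funext fun ω => hrec n hn ω
      rw [hcomp, ← Measure.map_map (splitting_measurable (p n)) (hUm n), ih,
        splitting_uniform (hp n)]
  -- tail probability of U n
  have htail : ∀ n, nstar ≤ n → ℙ {ω | q n < U n ω} = ENNReal.ofReal (1 - q n) := by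
    intro n hn
    have h0 : {ω | q n < U n ω} = U n ⁻¹' Set.Ioi (q n) := rfl
    rw [h0, ← Measure.map_apply (hUm n) measurableSet_Ioi, hmap n hn,
      Measure.restrict_apply measurableSet_Ioi]
    have h1 : Set.Ioi (q n) ∩ Set.Ioo (0:ℝ) 1 = Set.Ioo (q n) 1 := by
      ext y
      simp only [Set.mem_inter_iff, Set.mem_Ioi, Set.mem_Ioo]
      exact ⟨fun ⟨a, _, b⟩ => ⟨a, b⟩, fun ⟨a, b⟩ => ⟨a, lt_trans (hq n hn).1 a, b⟩⟩
    rw [h1, Real.volume_Ioo]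
  -- {n < ς} is contained in {q n < U n}
  have hsub : ∀ n, nstar ≤ n → {ω | n < ς ω} ⊆ {ω | q n < U n ω} := by
    intro n hn ω hω
    simp only [Set.mem_setOf_eq] at hω ⊢
    by_contra h
    push_neg at h
    have hmem : n ∈ {m : ℕ | nstar ≤ m ∧ U m ω ≤ q m} := ⟨hn, h⟩
    have h2 : ς ω ≤ n := by rw [hς ω]; exact Nat.sInf_le hmem
    omega
  have hbound : ∀ n, nstar ≤ n → ℙ {ω | n < ς ω} ≤ ENNReal.ofReal (1 - q n) := fun n hn =>
    (measure_mono (hsub n hn)).trans_eq (htail n hn)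
  -- measurability of the level sets of ς
  have hBm : ∀ m : ℕ, MeasurableSet {ω : Ω | nstar ≤ m ∧ U m ω ≤ q m} := by
    intro m
    by_cases h : nstar ≤ m
    · simp only [h, true_and]
      exact measurableSet_le (hUm m) measurable_const
    · simp only [h, false_and, Set.setOf_false]
      exact MeasurableSet.empty
  have hςmeas : ∀ n : ℕ, MeasurableSet {ω : Ω | n < ς ω} := by
    intro n
    have heq : {ω : Ω | n < ς ω} =
        (⋃ m, {ω : Ω | nstar ≤ m ∧ U m ω ≤ q m}) ∩
          (⋂ m ∈ Finset.range (n+1), {ω : Ω | nstar ≤ m ∧ U m ω ≤ q m}ᶜ) := by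
      ext ω
      simp only [Set.mem_inter_iff, Set.mem_iUnion, Set.mem_setOf_eq, Set.mem_iInter,
        Set.mem_compl_iff, Finset.mem_range, hς ω]
      constructor
      · intro hlt
        have hne : {m : ℕ | nstar ≤ m ∧ U m ω ≤ q m}.Nonempty := by
          by_contra hemp
          rw [Set.not_nonempty_iff_eq_empty] at hemp
          rw [hemp, Nat.sInf_empty] at hlt
          omega
        obtain ⟨m, hm⟩ := hne
        refine ⟨⟨m, hm⟩, fun k hk hkmem => ?_⟩
        have : sInf {m : ℕ | nstar ≤ m ∧ U m ω ≤ q m} ≤ k :=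
          Nat.sInf_le hkmem
        omega
      · rintro ⟨⟨m, hm⟩, hall⟩
        have hmem := Nat.sInf_mem (⟨m, hm⟩ : {m : ℕ | nstar ≤ m ∧ U m ω ≤ q m}.Nonempty)
        by_contra hle
        push_neg at hle
        exact hall _ (by omega) hmem
    rw [heq]
    exact (MeasurableSet.iUnion hBm).inter
      (Finset.measurableSet_biInter _ (fun m _ => (hBm m).compl))
  refine ⟨?_, ?_, ?_⟩
  · -- part (a)
    intro hq1
    rw [ae_iff]
    have hsubN : ∀ n, nstar ≤ n →
        {ω : Ω | ¬ {m : ℕ | nstar ≤ m ∧ U m ω ≤ q m}.Nonempty} ⊆ {ω | q n < U n ω} := by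
      intro n hn ω hω
      simp only [Set.mem_setOf_eq, Set.not_nonempty_iff_eq_empty] at hω ⊢
      by_contra h
      push_neg at h
      have hmem : n ∈ {m : ℕ | nstar ≤ m ∧ U m ω ≤ q m} := ⟨hn, h⟩
      rw [hω] at hmem
      exact hmem
    have hle : ∀ n, nstar ≤ n →
        ℙ {ω : Ω | ¬ {m : ℕ | nstar ≤ m ∧ U m ω ≤ q m}.Nonempty} ≤ ENNReal.ofReal (1 - q n) :=
      fun n hn => (measure_mono (hsubN n hn)).trans_eq (htail n hn)
    have ht0 : Tendsto (fun n => ENNReal.ofReal (1 - q n)) atTop (nhds 0) := by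
      have h1 : Tendsto (fun n => 1 - q n) atTop (nhds 0) := by
        have := hq1.const_sub 1
        simpa using this
      have := ENNReal.tendsto_ofReal h1
      simpa using this
    have hfin : ℙ {ω : Ω | ¬ {m : ℕ | nstar ≤ m ∧ U m ω ≤ q m}.Nonempty} ≤ 0 :=
      ge_of_tendsto ht0 (eventually_atTop.mpr ⟨nstar, hle⟩)
    exact le_antisymm hfin zero_le
  · -- part (b)
    intro hsum
    have key : ∀ ω, (ς ω : ℝ≥0∞) =
        ∑' n : ℕ, Set.indicator {ω' : Ω | n < ς ω'} (fun _ => (1:ℝ≥0∞)) ω := by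
      intro ω
      have h1 : ∀ i ∉ Finset.range (ς ω),
          Set.indicator {ω' : Ω | i < ς ω'} (fun _ => (1:ℝ≥0∞)) ω = 0 := by
        intro i hi
        rw [Set.indicator_of_notMem]
        simp only [Set.mem_setOf_eq, not_lt]
        exact le_of_not_gt (fun h => hi (Finset.mem_range.mpr h))
      rw [tsum_eq_sum h1]
      have h2 : ∀ i ∈ Finset.range (ς ω),
          Set.indicator {ω' : Ω | i < ς ω'} (fun _ => (1:ℝ≥0∞)) ω = 1 := by
        intro i hi
        exact Set.indicator_of_mem (Finset.mem_range.mp hi : ω ∈ {ω' : Ω | i < ς ω'}) (fun _ => (1:ℝ≥0∞))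
      rw [Finset.sum_congr rfl h2]
      simp
    have hlin : ∫⁻ ω, (ς ω : ℝ≥0∞) ∂ℙ = ∑' n : ℕ, ℙ {ω : Ω | n < ς ω} := by
      simp_rw [key]
      rw [lintegral_tsum (fun n => (measurable_const.indicator (hςmeas n)).aemeasurable)]
      congr 1
      funext n
      rw [lintegral_indicator (hςmeas n), setLIntegral_one]
    rw [hlin, ← Summable.sum_add_tsum_nat_add' (f := fun n => ℙ {ω : Ω | n < ς ω}) (k := nstar)
      ENNReal.summable]
    rw [ENNReal.add_lt_top]
    constructor
    · exact ENNReal.sum_lt_top.mpr (fun a _ => (measure_lt_top ℙ _))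
    · have hb : ∀ n : ℕ, ℙ {ω : Ω | (n + nstar) < ς ω} ≤ ENNReal.ofReal (1 - q (nstar + n)) := by
        intro n
        simpa [add_comm n nstar] using hbound (nstar + n) (by omega)
      calc ∑' n : ℕ, ℙ {ω : Ω | (n + nstar) < ς ω}
          ≤ ∑' n : ℕ, ENNReal.ofReal (1 - q (nstar + n)) := ENNReal.tsum_le_tsum hb
        _ = ENNReal.ofReal (∑' n : ℕ, (1 - q (nstar + n))) :=
            (ENNReal.ofReal_tsum_of_nonneg
              (fun n => by linarith [(hq (nstar + n) (by omega)).2]) hsum).symm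
        _ < ⊤ := ENNReal.ofReal_lt_top
  · intro t ht hsum
    set c : ℕ → ℝ≥0∞ := fun n => ENNReal.ofReal (Real.exp (t * (n+1)) - Real.exp (t * n))
      with hcdef
    have hmono : ∀ n : ℕ, (0:ℝ) ≤ Real.exp (t * (n+1)) - Real.exp (t * n) := by
      intro n
      have : t * n ≤ t * (n+1) := by nlinarith
      linarith [Real.exp_le_exp.mpr this]
    have key : ∀ ω, ENNReal.ofReal (Real.exp (t * ς ω)) =
        1 + ∑' n : ℕ, Set.indicator {ω' : Ω | n < ς ω'} (fun _ => c n) ω := by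
      intro ω
      have h1 : ∀ i ∉ Finset.range (ς ω),
          Set.indicator {ω' : Ω | i < ς ω'} (fun _ => c i) ω = 0 := by
        intro i hi
        rw [Set.indicator_of_notMem]
        simp only [Set.mem_setOf_eq, not_lt]
        exact le_of_not_gt (fun h => hi (Finset.mem_range.mpr h))
      rw [tsum_eq_sum h1]
      have h2 : ∀ i ∈ Finset.range (ς ω),
          Set.indicator {ω' : Ω | i < ς ω'} (fun _ => c i) ω = c i := by
        intro i hi
        exact Set.indicator_of_mem (Finset.mem_range.mp hi : ω ∈ {ω' : Ω | i < ς ω'})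
          (fun _ => c i)
      rw [Finset.sum_congr rfl h2]
      have h3 : ∑ i ∈ Finset.range (ς ω), c i =
          ENNReal.ofReal (∑ i ∈ Finset.range (ς ω),
            (Real.exp (t * (i+1)) - Real.exp (t * i))) := by
        rw [ENNReal.ofReal_sum_of_nonneg (fun i _ => hmono i)]
      have h4 : ∑ i ∈ Finset.range (ς ω), (Real.exp (t * (i+1)) - Real.exp (t * i))
          = Real.exp (t * ς ω) - Real.exp (t * 0) := by
        have := Finset.sum_range_sub (fun i : ℕ => Real.exp (t * i)) (ς ω)
        simp only [Nat.cast_zero] at this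
        rw [← this]
        refine Finset.sum_congr rfl (fun i _ => ?_)
        push_cast
        ring_nf
      rw [h3, h4]
      have h5 : (1:ℝ) ≤ Real.exp (t * ς ω) := by
        rw [← Real.exp_zero]
        exact Real.exp_le_exp.mpr (mul_nonneg ht.le (Nat.cast_nonneg _))
      rw [← ENNReal.ofReal_one, ← ENNReal.ofReal_add (by norm_num) (by simp only [mul_zero, Real.exp_zero]; linarith)]
      congr 1
      simp [Real.exp_zero]
    have hlin : ∫⁻ ω, ENNReal.ofReal (Real.exp (t * ς ω)) ∂ℙ =
        1 + ∑' n : ℕ, c n * ℙ {ω : Ω | n < ς ω} := by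
      simp_rw [key]
      rw [lintegral_add_left measurable_const,
        lintegral_tsum (fun n => (measurable_const.indicator (hςmeas n)).aemeasurable)]
      simp only [lintegral_const, measure_univ, mul_one]
      exact congrArg (1 + ·) (tsum_congr (fun n => by
        rw [lintegral_indicator (hςmeas n), setLIntegral_const]))
    rw [hlin]
    rw [ENNReal.add_lt_top]
    refine ⟨ENNReal.one_lt_top, ?_⟩
    rw [← Summable.sum_add_tsum_nat_add' (f := fun n => c n * ℙ {ω : Ω | n < ς ω}) (k := nstar)
      ENNReal.summable]
    rw [ENNReal.add_lt_top]
    constructor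
    · exact ENNReal.sum_lt_top.mpr (fun a _ =>
        ENNReal.mul_lt_top ENNReal.ofReal_lt_top (measure_lt_top ℙ _))
    · have hb : ∀ n : ℕ, c (n + nstar) * ℙ {ω : Ω | (n + nstar) < ς ω} ≤
          ENNReal.ofReal (Real.exp t *
            ((1 - q (nstar + n)) * Real.exp (t * (nstar + n)))) := by
        intro n
        have h1 : ℙ {ω : Ω | (n + nstar) < ς ω} ≤ ENNReal.ofReal (1 - q (nstar + n)) := by
          simpa [add_comm n nstar] using hbound (nstar + n) (by omega)
        calc c (n + nstar) * ℙ {ω : Ω | (n + nstar) < ς ω}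
            ≤ c (n + nstar) * ENNReal.ofReal (1 - q (nstar + n)) := mul_le_mul_right h1 _
          _ = ENNReal.ofReal ((Real.exp (t * ((n:ℝ) + nstar + 1)) - Real.exp (t * ((n:ℝ) + nstar)))
                * (1 - q (nstar + n))) := by
              rw [hcdef, ← ENNReal.ofReal_mul (hmono (n + nstar))]
              push_cast
              ring_nf
          _ ≤ ENNReal.ofReal (Real.exp t * ((1 - q (nstar + n)) * Real.exp (t * (nstar + n)))) := by
              apply ENNReal.ofReal_le_ofReal
              have hqn : (0:ℝ) ≤ 1 - q (nstar + n) := by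
                linarith [(hq (nstar + n) (by omega)).2]
              have hE : Real.exp (t * ((n:ℝ) + nstar + 1)) - Real.exp (t * ((n:ℝ) + nstar)) ≤
                  Real.exp t * Real.exp (t * ((n:ℝ) + nstar)) := by
                have : Real.exp (t * ((n:ℝ) + nstar + 1)) =
                    Real.exp t * Real.exp (t * ((n:ℝ) + nstar)) := by
                  rw [← Real.exp_add]; ring_nf
                nlinarith [Real.exp_pos (t * ((n:ℝ) + nstar))]
              have hcast : t * ((nstar:ℝ) + n) = t * ((n:ℝ) + nstar) := by ring
              rw [hcast]
              nlinarith [Real.exp_pos (t * ((n:ℝ) + nstar)), Real.exp_pos t,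
                mul_le_mul_of_nonneg_right hE hqn]
      calc ∑' n : ℕ, c (n + nstar) * ℙ {ω : Ω | (n + nstar) < ς ω}
          ≤ ∑' n : ℕ, ENNReal.ofReal (Real.exp t *
              ((1 - q (nstar + n)) * Real.exp (t * (nstar + n)))) := ENNReal.tsum_le_tsum hb
        _ = ENNReal.ofReal (∑' n : ℕ, Real.exp t *
              ((1 - q (nstar + n)) * Real.exp (t * (nstar + n)))) := by
            refine (ENNReal.ofReal_tsum_of_nonneg (fun n => ?_) ?_).symm
            · have hqn : (0:ℝ) ≤ 1 - q (nstar + n) := by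
                linarith [(hq (nstar + n) (by omega)).2]
              positivity
            · simpa [mul_assoc] using hsum.mul_left (Real.exp t)
        _ < ⊤ := ENNReal.ofReal_lt_top
end
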